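/- The word length on the free group F_n (n ≥ 1) is a conditionally negative function: |e| = 0, |g| = |g⁻¹|, and ∑_{g,h} conj(a_g) a_h |g⁻¹h| ≤ 0 for all finitely supported a : F_n → ℂ with ∑_g a_g = 0. -/

import Mathlib

open ComplexOrder

set_option linter.unusedSectionVars false

namespace CNAux
open FreeGroup
variable {α : Type*} [DecidableEq α]

/-- A word is reduced iff it has no adjacent cancelling pair. -/
def Reduced (L : List (α × Bool)) : Prop :=
  List.Chain' (fun p q => ¬(p.1 = q.1 ∧ q.2 = !p.2)) L

omit [DecidableEq α] in
theorem not_chain'_exists {R : α × Bool → α × Bool → Prop} :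
    ∀ (L : List (α × Bool)), ¬ List.Chain' R L →
      ∃ L₁ p q L₂, L = L₁ ++ p :: q :: L₂ ∧ ¬ R p q := by
  intro L
  induction L with
  | nil => intro h; exact absurd List.isChain_nil h
  | cons a L ih =>
    intro h
    cases L with
    | nil => exact absurd (List.isChain_singleton a) h
    | cons b L =>
      unfold List.Chain' at h; rw [List.isChain_cons_cons] at h
      by_cases hab : R a b
      · have : ¬ List.Chain' R (b :: L) := fun hc => h ⟨hab, hc⟩
        obtain ⟨L₁, p, q, L₂, heq, hnr⟩ := ih this
        exact ⟨a :: L₁, p, q, L₂, by rw [heq]; rfl, hnr⟩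
      · exact ⟨[], a, b, L, rfl, hab⟩

omit [DecidableEq α] in
theorem chain'_middle {R : α × Bool → α × Bool → Prop} :
    ∀ (L₁ : List (α × Bool)) {p q L₂}, List.Chain' R (L₁ ++ p :: q :: L₂) → R p q
  | [], _, _, _, h => (List.isChain_cons_cons.mp h).1
  | _ :: L₁, _, _, _, h => chain'_middle L₁ h.tail

theorem reduced_of_reduce_eq {L : List (α × Bool)} (h : reduce L = L) : Reduced L := by
  by_contra hc
  obtain ⟨L₁, p, q, L₂, heq, hnr⟩ := not_chain'_exists L hc
  rw [not_not] at hnr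
  obtain ⟨px, pb⟩ := p
  obtain ⟨qx, qb⟩ := q
  obtain ⟨h1, h2⟩ := hnr
  dsimp at h1 h2
  subst h1; subst h2
  exact reduce.not (L₂ := L₁) (by rw [h, heq])

theorem reduced_toWord (x : FreeGroup α) : Reduced x.toWord :=
  reduced_of_reduce_eq (reduce_toWord x)

theorem reduce_eq_self_of_reduced {L : List (α × Bool)} (h : Reduced L) : reduce L = L := by
  have hred : Red L (reduce L) := reduce.red
  rcases Relation.ReflTransGen.cases_head hred with heq | ⟨c, hstep, _⟩
  · exact heq.symm
  · exfalso
    cases hstep with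
    | @not L₁ L₂ x b => exact chain'_middle L₁ h ⟨rfl, rfl⟩

theorem reduced_invRev {L : List (α × Bool)} (h : Reduced L) : Reduced (invRev L) := by
  unfold Reduced at *
  unfold List.Chain' at *
  rw [invRev, List.isChain_reverse, List.isChain_map]
  refine h.imp ?_
  rintro ⟨x, b⟩ ⟨y, c⟩ hr hflip
  simp only [flip] at hflip
  obtain ⟨h1, h2⟩ := hflip
  simp only [Bool.not_not] at h2
  exact hr ⟨h1.symm, h2.symm⟩

/-- length of the longest common prefix -/
def cp : List (α × Bool) → List (α × Bool) → ℕ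
  | a :: u, b :: v => if a = b then cp u v + 1 else 0
  | _, _ => 0

theorem cp_nil_left (v : List (α × Bool)) : cp [] v = 0 := by cases v <;> rfl
theorem cp_nil_right (u : List (α × Bool)) : cp u [] = 0 := by cases u <;> rfl
theorem cp_cons (a b) (u v : List (α × Bool)) :
    cp (a :: u) (b :: v) = if a = b then cp u v + 1 else 0 := rfl

theorem invRev_cons (a : α × Bool) (u : List (α × Bool)) :
    invRev (a :: u) = invRev u ++ [(a.1, !a.2)] := by
  simp [invRev]

theorem key_length : ∀ (u v : List (α × Bool)), Reduced u → Reduced v →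
    (reduce (invRev u ++ v)).length + 2 * cp u v = u.length + v.length := by
  intro u
  induction u with
  | nil =>
    intro v _ hv
    simp [invRev, cp_nil_left, reduce_eq_self_of_reduced hv]
  | cons a u ih =>
    intro v hu hv
    cases v with
    | nil =>
      rw [List.append_nil, reduce_eq_self_of_reduced (reduced_invRev hu), cp_nil_right]
      simp [invRev]
    | cons b v =>
      by_cases hab : a = b
      · subst hab
        have hstep : Red.Step (invRev u ++ (a.1, !a.2) :: (a.1, a.2) :: v) (invRev u ++ v) := by
          have := @Red.Step.not α (invRev u) v a.1 (!a.2)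
          simpa using this
        have heq : reduce (invRev (a :: u) ++ a :: v) = reduce (invRev u ++ v) := by
          rw [invRev_cons]
          have : invRev u ++ [(a.1, !a.2)] ++ a :: v
              = invRev u ++ (a.1, !a.2) :: (a.1, a.2) :: v := by simp
          rw [this]
          exact reduce.Step.eq hstep
        rw [heq, cp_cons, if_pos rfl]
        have := ih v hu.tail hv.tail
        simp only [List.length_cons]
        omega
      · have hred : Reduced (invRev (a :: u) ++ b :: v) := by
          rw [invRev_cons, List.append_assoc]
          rw [Reduced]; unfold List.Chain'; rw [List.isChain_append]
          refine ⟨reduced_invRev hu.tail, ?_, ?_⟩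
          · rw [List.singleton_append, List.isChain_cons_cons]
            refine ⟨?_, hv⟩
            rintro ⟨h1, h2⟩
            simp only [Bool.not_not] at h2
            exact hab (Prod.ext h1 h2.symm)
          · have hIR := reduced_invRev hu
            rw [invRev_cons, Reduced] at hIR; unfold List.Chain' at hIR; rw [List.isChain_append] at hIR
            intro x hx y hy
            simp only [List.singleton_append, List.head?_cons, Option.mem_def] at hy
            exact hIR.2.2 x hx y (by simp [← hy])
        rw [reduce_eq_self_of_reduced hred, cp_cons, if_neg hab]
        simp [invRev_length]

theorem norm_formula (g h : FreeGroup α) :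
    norm (g⁻¹ * h) + 2 * cp g.toWord h.toWord = norm g + norm h := by
  have hmk : g⁻¹ * h = mk (invRev g.toWord ++ h.toWord) := by
    have : (mk g.toWord)⁻¹ * mk h.toWord = mk (invRev g.toWord ++ h.toWord) := by
      rw [inv_mk, mul_mk]
    simpa [mk_toWord] using this
  have h1 : norm (g⁻¹ * h) = (reduce (invRev g.toWord ++ h.toWord)).length := by
    show (g⁻¹ * h).toWord.length = _
    rw [hmk, toWord_mk]
  have h2 : norm g = g.toWord.length := rfl
  have h3 : norm h = h.toWord.length := rfl
  rw [h1, h2, h3]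
  exact key_length _ _ (reduced_toWord g) (reduced_toWord h)

theorem cp_le_left : ∀ u v : List (α × Bool), cp u v ≤ u.length ∧ cp u v ≤ v.length
  | [], v => by cases v <;> simp [cp]
  | a :: u, [] => by simp [cp]
  | a :: u, b :: v => by
    have := cp_le_left u v
    by_cases hab : a = b <;> simp [cp, hab] <;> omega

theorem take_cp_eq : ∀ u v : List (α × Bool), u.take (cp u v) = v.take (cp u v)
  | [], v => by cases v <;> simp [cp]
  | a :: u, [] => by simp [cp]
  | a :: u, b :: v => by
    by_cases hab : a = b
    · simp [cp, hab, take_cp_eq u v]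
    · simp [cp, hab]

theorem length_le_cp : ∀ (w u v : List (α × Bool)), w <+: u → w <+: v → w.length ≤ cp u v
  | [], _, _, _, _ => by simp
  | c :: w, u, v, hu, hv => by
    cases u with
    | nil => simp at hu
    | cons a u =>
      cases v with
      | nil => simp at hv
      | cons b v =>
        rw [List.cons_prefix_cons] at hu hv
        obtain ⟨rfl, hu'⟩ := hu
        obtain ⟨rfl, hv'⟩ := hv
        simp only [cp, if_pos rfl, List.length_cons]
        exact Nat.succ_le_succ (length_le_cp w u v hu' hv')

theorem prefix_of_le_cp {u v : List (α × Bool)} {k : ℕ} (hk : k ≤ cp u v) :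
    u.take k <+: v := by
  have h1 : u.take k = v.take k := by
    have := congrArg (List.take k) (take_cp_eq u v)
    rwa [List.take_take, List.take_take, Nat.min_eq_left hk] at this
  rw [h1]; exact List.take_prefix k v

theorem eq_take_of_prefix {w u : List (α × Bool)} (h : w <+: u) : w = u.take w.length :=
  (List.prefix_take_iff.mpr ⟨h, le_rfl⟩).eq_of_length (by
    simp [List.length_take]
    exact h.length_le)

/-- The counting lemma: common prefix length as a count of shared nonempty prefixes. -/
theorem count_lemma {s : Finset (FreeGroup α)} {g h : FreeGroup α}
    (hg : g ∈ s) (hh : h ∈ s) :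
    ((s.biUnion (fun x => (Finset.range x.toWord.length).image
        (fun i => x.toWord.take (i + 1)))).filter
      (fun w => w <+: g.toWord ∧ w <+: h.toWord)).card = cp g.toWord h.toWord := by
  set u := g.toWord
  set v := h.toWord
  have hsetEq : ((s.biUnion (fun x => (Finset.range x.toWord.length).image
        (fun i => x.toWord.take (i + 1)))).filter
      (fun w => w <+: u ∧ w <+: v))
      = (Finset.range (cp u v)).image (fun i => u.take (i + 1)) := by
    ext w
    simp only [Finset.mem_filter, Finset.mem_biUnion, Finset.mem_image, Finset.mem_range]
    constructor
    · rintro ⟨⟨x, hx, i, hi, rfl⟩, hwu, hwv⟩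
      set w := x.toWord.take (i + 1) with hw
      have hlen : w.length = i + 1 := by
        rw [hw, List.length_take]
        omega
      have hle : w.length ≤ cp u v := length_le_cp w u v hwu hwv
      refine ⟨i, by omega, ?_⟩
      have := eq_take_of_prefix hwu
      rw [this, hlen]
    · rintro ⟨i, hi, rfl⟩
      have hcp := cp_le_left u v
      have h1 : i + 1 ≤ cp u v := hi
      refine ⟨⟨g, hg, i, show i < u.length by omega, rfl⟩, List.take_prefix _ _, prefix_of_le_cp h1⟩
  rw [hsetEq]
  rw [Finset.card_image_of_injOn, Finset.card_range]
  intro i hi j hj hij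
  simp only [Finset.mem_coe, Finset.mem_range] at hi hj
  have hcp := cp_le_left u v
  have h1 : (u.take (i + 1)).length = i + 1 := by rw [List.length_take]; omega
  have h2 : (u.take (j + 1)).length = j + 1 := by rw [List.length_take]; omega
  have := congrArg List.length hij
  rw [h1, h2] at this
  omega

end CNAux

open CNAux FreeGroup in
/-- The word length on the free group `F_n` is conditionally negative. -/
theorem freeGroup_wordLength_condNeg (n : ℕ) (hn : 1 ≤ n) :
    FreeGroup.norm (1 : FreeGroup (Fin n)) = 0 ∧
    (∀ g : FreeGroup (Fin n), FreeGroup.norm g = FreeGroup.norm g⁻¹) ∧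
    ∀ (s : Finset (FreeGroup (Fin n))) (a : FreeGroup (Fin n) → ℂ),
      (∑ g ∈ s, a g) = 0 →
      (∑ g ∈ s, ∑ h ∈ s,
        (starRingEnd ℂ) (a g) * a h * ((FreeGroup.norm (g⁻¹ * h) : ℝ) : ℂ)) ≤ 0 := by
  refine ⟨norm_one, fun g => norm_inv_eq.symm, ?_⟩
  intro s a ha
  classical
  set T : Finset (List (Fin n × Bool)) :=
    s.biUnion (fun x => (Finset.range x.toWord.length).image (fun i => x.toWord.take (i + 1)))
    with hT
  set χ : List (Fin n × Bool) → FreeGroup (Fin n) → ℂ :=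
    fun w x => if w <+: x.toWord then 1 else 0 with hχ
  -- the norm identity
  have hnorm : ∀ g ∈ s, ∀ h ∈ s, ((norm (g⁻¹ * h) : ℝ) : ℂ)
      = (norm g : ℂ) + (norm h : ℂ) - 2 * ∑ w ∈ T, χ w g * χ w h := by
    intro g hg h hh
    have hsum : ∑ w ∈ T, χ w g * χ w h = (cp g.toWord h.toWord : ℂ) := by
      have : ∀ w ∈ T, χ w g * χ w h
          = if (w <+: g.toWord ∧ w <+: h.toWord) then (1 : ℂ) else 0 := by
        intro w _
        simp only [hχ]
        split_ifs with h1 h2 h3 <;> simp_all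
      rw [Finset.sum_congr rfl this, Finset.sum_boole, ← count_lemma hg hh, hT]
    rw [hsum]
    have := norm_formula g h
    have hcast : ((norm (g⁻¹ * h) : ℕ) : ℂ) + 2 * (cp g.toWord h.toWord : ℂ)
        = (norm g : ℂ) + (norm h : ℂ) := by
      exact_mod_cast congrArg (Nat.cast : ℕ → ℂ) this
    push_cast
    linear_combination hcast
  -- notation
  set P : FreeGroup (Fin n) → List (Fin n × Bool) → ℂ :=
    fun g w => (starRingEnd ℂ) (a g) * χ w g with hP
  set Q : FreeGroup (Fin n) → List (Fin n × Bool) → ℂ := fun g w => a g * χ w g with hQ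
  -- expand the sum
  have hexp : (∑ g ∈ s, ∑ h ∈ s,
        (starRingEnd ℂ) (a g) * a h * ((norm (g⁻¹ * h) : ℝ) : ℂ))
      = (∑ g ∈ s, ∑ h ∈ s, ((starRingEnd ℂ) (a g) * (norm g : ℂ) * a h
          + (starRingEnd ℂ) (a g) * (a h * (norm h : ℂ))
          - 2 * ∑ w ∈ T, P g w * Q h w)) := by
    refine Finset.sum_congr rfl fun g hg => Finset.sum_congr rfl fun h hh => ?_
    rw [hnorm g hg h hh]
    have hw : ∑ w ∈ T, P g w * Q h w
        = (starRingEnd ℂ) (a g) * a h * ∑ w ∈ T, χ w g * χ w h := by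
      rw [Finset.mul_sum]
      exact Finset.sum_congr rfl fun w _ => by simp only [hP, hQ]; ring
    rw [hw]; ring
  rw [hexp]
  have hsplit : (∑ g ∈ s, ∑ h ∈ s, ((starRingEnd ℂ) (a g) * (norm g : ℂ) * a h
          + (starRingEnd ℂ) (a g) * (a h * (norm h : ℂ))
          - 2 * ∑ w ∈ T, P g w * Q h w))
      = (∑ g ∈ s, ∑ h ∈ s, (starRingEnd ℂ) (a g) * (norm g : ℂ) * a h)
        + (∑ g ∈ s, ∑ h ∈ s, (starRingEnd ℂ) (a g) * (a h * (norm h : ℂ)))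
        - 2 * (∑ g ∈ s, ∑ h ∈ s, ∑ w ∈ T, P g w * Q h w) := by
    simp [Finset.sum_add_distrib, Finset.sum_sub_distrib, Finset.mul_sum]
  rw [hsplit]
  -- first term vanishes
  have hA : (∑ g ∈ s, ∑ h ∈ s, (starRingEnd ℂ) (a g) * (norm g : ℂ) * a h) = 0 := by
    refine Finset.sum_eq_zero fun g hg => ?_
    rw [← Finset.mul_sum, ha, mul_zero]
  -- second term vanishes
  have hB : (∑ g ∈ s, ∑ h ∈ s, (starRingEnd ℂ) (a g) * (a h * (norm h : ℂ))) = 0 := by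
    have : ∀ g ∈ s, ∑ h ∈ s, (starRingEnd ℂ) (a g) * (a h * (norm h : ℂ))
        = (starRingEnd ℂ) (a g) * ∑ h ∈ s, a h * (norm h : ℂ) :=
      fun g _ => (Finset.mul_sum _ _ _).symm
    rw [Finset.sum_congr rfl this, ← Finset.sum_mul, ← map_sum, ha, map_zero, zero_mul]
  -- third term is a sum of squares
  have hswap : (∑ g ∈ s, ∑ h ∈ s, ∑ w ∈ T, P g w * Q h w)
      = ∑ w ∈ T, (∑ g ∈ s, P g w) * (∑ h ∈ s, Q h w) := by
    have e1 : (∑ g ∈ s, ∑ h ∈ s, ∑ w ∈ T, P g w * Q h w)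
        = ∑ g ∈ s, ∑ w ∈ T, ∑ h ∈ s, P g w * Q h w :=
      Finset.sum_congr rfl fun g _ => Finset.sum_comm
    rw [e1, Finset.sum_comm]
    refine Finset.sum_congr rfl fun w _ => ?_
    rw [Finset.sum_mul]
    exact Finset.sum_congr rfl fun g _ => (Finset.mul_sum _ _ _).symm
  rw [hA, hB, hswap]
  have hPQ : ∀ w, (∑ g ∈ s, P g w) = (starRingEnd ℂ) (∑ g ∈ s, Q g w) := by
    intro w
    rw [map_sum]
    refine Finset.sum_congr rfl fun g _ => ?_
    simp only [hP, hQ, map_mul, hχ]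
    congr 1
    split_ifs <;> simp
  have hnn : (0 : ℂ) ≤ ∑ w ∈ T, (∑ g ∈ s, P g w) * (∑ h ∈ s, Q h w) := by
    refine Finset.sum_nonneg fun w _ => ?_
    rw [hPQ w]
    exact star_mul_self_nonneg _
  have : (0 : ℂ) ≤ 2 * ∑ w ∈ T, (∑ g ∈ s, P g w) * (∑ h ∈ s, Q h w) :=
    mul_nonneg (by norm_num) hnn
  rw [zero_add, zero_sub]
  exact neg_nonpos.mpr this
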